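/- Suppose integers e1,...,e6, a1, a2 satisfy e4e5²e6 + e1a1 + e2a2 = 0 and the six coordinates x0 = e1²e2²e3³e4²e5, x1 = e1²e2e3²e4a1, x2 = e6a1a2, x3 = e1e3e4e5e6a1, x4 = e1e2²e3²e4a2, x5 = e2e3e4e5e6a2 all have absolute value at most B (with B ≥ 1). Then |e1e2e3²e4²e5²e6| ≤ 2B and |e3e4²e5³e6²| ≤ 2B. -/

import Mathlib

theorem further_height_conditions
    (e1 e2 e3 e4 e5 e6 a1 a2 B : ℤ)
    (h1 : 0 < e1) (h2 : 0 < e2) (h3 : 0 < e3) (h4 : 0 < e4) (h5 : 0 < e5)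
    (h6 : e6 ≠ 0) (hB : 1 ≤ B)
    (htorsor : e4 * e5 ^ 2 * e6 + e1 * a1 + e2 * a2 = 0)
    (hx0 : |e1 ^ 2 * e2 ^ 2 * e3 ^ 3 * e4 ^ 2 * e5| ≤ B)
    (hx1 : |e1 ^ 2 * e2 * e3 ^ 2 * e4 * a1| ≤ B)
    (hx2 : |e6 * a1 * a2| ≤ B)
    (hx3 : |e1 * e3 * e4 * e5 * e6 * a1| ≤ B)
    (hx4 : |e1 * e2 ^ 2 * e3 ^ 2 * e4 * a2| ≤ B)
    (hx5 : |e2 * e3 * e4 * e5 * e6 * a2| ≤ B) :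
    |e1 * e2 * e3 ^ 2 * e4 ^ 2 * e5 ^ 2 * e6| ≤ 2 * B ∧
    |e3 * e4 ^ 2 * e5 ^ 3 * e6 ^ 2| ≤ 2 * B := by
  constructor
  · have h : e1 * e2 * e3 ^ 2 * e4 ^ 2 * e5 ^ 2 * e6 =
      -((e1 ^ 2 * e2 * e3 ^ 2 * e4 * a1) + (e1 * e2 ^ 2 * e3 ^ 2 * e4 * a2)) := by linear_combination (e1 * e2 * e3 ^ 2 * e4) * htorsor
    rw [h, abs_neg]
    calc |(e1 ^ 2 * e2 * e3 ^ 2 * e4 * a1) + (e1 * e2 ^ 2 * e3 ^ 2 * e4 * a2)|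
        ≤ |e1 ^ 2 * e2 * e3 ^ 2 * e4 * a1| + |e1 * e2 ^ 2 * e3 ^ 2 * e4 * a2| := abs_add_le _ _
      _ ≤ 2 * B := by linarith
  · have h : e3 * e4 ^ 2 * e5 ^ 3 * e6 ^ 2 =
      -((e1 * e3 * e4 * e5 * e6 * a1) + (e2 * e3 * e4 * e5 * e6 * a2)) := by linear_combination (e3 * e4 * e5 * e6) * htorsor
    rw [h, abs_neg]
    calc |(e1 * e3 * e4 * e5 * e6 * a1) + (e2 * e3 * e4 * e5 * e6 * a2)|
        ≤ |e1 * e3 * e4 * e5 * e6 * a1| + |e2 * e3 * e4 * e5 * e6 * a2| := abs_add_le _ _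
      _ ≤ 2 * B := by linarith
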